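/- arXiv:2102.11681 — 2 statements merged into one kernel-verified Lean document; each statement's English description precedes it below -/
import Mathlib

section
/- Let h > 0, p, d ≥ 1 and R_1,…,R_p ∈ ℂ^{d×d} be matrices such that the block Vandermonde matrix V(e^{−hR_1},…,e^{−hR_p}) is invertible, where e^{−hR_k} denotes the matrix exponential. Define Ψ_1,…,Ψ_p ∈ ℂ^{d×d} by the block row identity [Ψ_p, Ψ_{p−1}, …, Ψ_1] = −[e^{−phR_1}, …, e^{−phR_p}] V(e^{−hR_1},…,e^{−hR_p})^{−1}. Then: (i) Ψ_p is invertible; (ii) defining Φ_j := −Ψ_p^{−1} Ψ_{p−j} for j = 1,…,p (with Ψ_0 := I_d), one has e^{phR_k} = Σ_{j=1}^p Φ_j e^{(p−j)hR_k} for every k = 1,…,p; equivalently, each e^{−hR_k} is a right solvent of the monic λ-matrix Ψ(λ) = I_d λ^p + Ψ_1 λ^{p−1} + … + Ψ_p. -/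
open Matrix

abbrev Mat (d e : ℕ) := Matrix (Fin d) (Fin e) ℂ

/-- The block Vandermonde matrix: the `(i,j)`-th `d×d` block is `S j ^ i` (0-indexed). -/
def vand (p d : ℕ) (S : Fin p → Mat d d) : Matrix (Fin p × Fin d) (Fin p × Fin d) ℂ :=
  fun x y => (S y.1 ^ (x.1 : ℕ)) x.2 y.2

/-- The block row `(e^{-phR_1}, …, e^{-phR_p})`. -/
noncomputable def expRow (p d : ℕ) (h : ℝ) (R : Fin p → Mat d d) :
    Matrix (Fin d) (Fin p × Fin d) ℂ :=
  fun a y => (NormedSpace.exp ((-((p : ℝ) * h) : ℂ) • R y.1)) a y.2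

/-- `S` is a right solvent of `I_d λ^p + Ψ_1 λ^{p-1} + … + Ψ_p`, where `Ψ i = Ψ_{i+1}`. -/
def IsRightSolvent (p d : ℕ) (Ψ : Fin p → Mat d d) (S : Mat d d) : Prop :=
  S ^ p + ∑ i : Fin p, Ψ i * S ^ (p - 1 - (i : ℕ)) = 0

/-- `ΨN p d Ψ n` is the coefficient `Ψ_n` (1-indexed), with the convention `Ψ_0 = I_d`,
where `Ψ i = Ψ_{i+1}`. -/
def ΨN (p d : ℕ) (Ψ : Fin p → Mat d d) (n : ℕ) : Mat d d :=
  if h0 : n = 0 then 1 else if h : n ≤ p then Ψ ⟨n - 1, by omega⟩ else 0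

theorem stmt_4 (p d : ℕ) (hp : 0 < p) (hd : 0 < d) (h : ℝ) (hh : 0 < h)
    (R : Fin p → Mat d d)
    (hV : IsUnit (vand p d (fun k => NormedSpace.exp ((-h : ℂ) • R k))))
    -- `[Ψ_p, Ψ_{p-1}, …, Ψ_1] = -[e^{-phR_1}, …, e^{-phR_p}] V(e^{-hR_1},…,e^{-hR_p})⁻¹`,
    -- i.e. the `j`-th block column (0-indexed) of the right-hand side is `Ψ_{p-j}`,
    -- i.e. `Ψ j.rev` with `Ψ i = Ψ_{i+1}`
    (Ψ : Fin p → Mat d d)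
    (hΨ : ∀ (j : Fin p) (a b : Fin d),
      Ψ j.rev a b =
        (-(expRow p d h R *
            (vand p d (fun k => NormedSpace.exp ((-h : ℂ) • R k)))⁻¹)) a (j, b)) :
    -- (i) `Ψ_p` is invertible
    IsUnit (Ψ ⟨p - 1, by omega⟩) ∧
    -- (ii) with `Φ_j := -Ψ_p⁻¹ Ψ_{p-j}` one has `e^{phR_k} = ∑_{j=1}^p Φ_j e^{(p-j)hR_k}`
    (∀ k : Fin p,
      NormedSpace.exp ((((p : ℝ) * h : ℝ) : ℂ) • R k) =
        ∑ j : Fin p,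
          (-(Ψ ⟨p - 1, by omega⟩)⁻¹ * ΨN p d Ψ (p - 1 - (j : ℕ))) *
            NormedSpace.exp (((((p - 1 - (j : ℕ) : ℕ) : ℝ) * h : ℝ) : ℂ) • R k)) ∧
    -- equivalently, each `e^{-hR_k}` is a right solvent of `Ψ(λ)`
    (∀ k : Fin p, IsRightSolvent p d Ψ (NormedSpace.exp ((-h : ℂ) • R k))) := by
  classical
  set E : Fin p → Mat d d := fun k => NormedSpace.exp ((-h : ℂ) • R k) with hEdef
  set V : Matrix (Fin p × Fin d) (Fin p × Fin d) ℂ := vand p d E with hVdef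
  have hVdet : IsUnit V.det := (Matrix.isUnit_iff_isUnit_det V).mp hV
  have hVV : V⁻¹ * V = 1 := Matrix.nonsing_inv_mul V hVdet
  have hVV' : V * V⁻¹ = 1 := Matrix.mul_nonsing_inv V hVdet
  set F : Fin p → Mat d d := fun k => NormedSpace.exp ((h : ℂ) • R k) with hFdef
  have hEF : ∀ k, E k * F k = 1 := by
    intro k
    rw [hEdef, hFdef]
    simp only
    rw [← Matrix.exp_add_of_commute _ _ (((Commute.refl (R k)).smul_left _).smul_right _),
      ← add_smul]
    norm_num [NormedSpace.exp_zero]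
  have hFE : ∀ k, F k * E k = 1 := by
    intro k
    rw [hEdef, hFdef]
    simp only
    rw [← Matrix.exp_add_of_commute _ _ (((Commute.refl (R k)).smul_left _).smul_right _),
      ← add_smul]
    norm_num [NormedSpace.exp_zero]
  have hcomm : ∀ k, Commute (E k) (F k) := fun k => (hEF k).trans (hFE k).symm
  have hpow : ∀ (k : Fin p) (n : ℕ),
      NormedSpace.exp ((((n : ℝ) * h : ℝ) : ℂ) • R k) = F k ^ n := by
    intro k n
    rw [hFdef]
    simp only
    rw [← Matrix.exp_nsmul]
    congr 1
    rw [← Nat.cast_smul_eq_nsmul ℂ, smul_smul]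
    congr 1
    push_cast
    ring
  have hEp : ∀ k : Fin p,
      NormedSpace.exp ((-((p : ℝ) * h) : ℂ) • R k) = E k ^ p := by
    intro k
    rw [hEdef]
    simp only
    rw [← Matrix.exp_nsmul]
    congr 1
    rw [← Nat.cast_smul_eq_nsmul ℂ, smul_smul]
    congr 1
    push_cast
    ring
  -- Step A: the defining relation gives the solvent identity
  have hMV : ∀ k : Fin p, ∑ j : Fin p, Ψ j.rev * E k ^ (j : ℕ) = -(E k ^ p) := by
    intro k
    have h1 : (-(expRow p d h R * V⁻¹)) * V = -(expRow p d h R) := by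
      rw [Matrix.neg_mul, Matrix.mul_assoc, hVV, Matrix.mul_one]
    funext a c
    have h2 : ((-(expRow p d h R * V⁻¹)) * V) a (k, c) = (-(expRow p d h R)) a (k, c) := by
      rw [h1]
    calc (∑ j : Fin p, Ψ j.rev * E k ^ (j : ℕ)) a c
        = ∑ j : Fin p, ∑ b : Fin d, Ψ j.rev a b * (E k ^ (j : ℕ)) b c := by
          simp [Matrix.sum_apply, Matrix.mul_apply]
      _ = ((-(expRow p d h R * V⁻¹)) * V) a (k, c) := by
          rw [Matrix.mul_apply, Fintype.sum_prod_type]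
          refine Finset.sum_congr rfl fun j _ => Finset.sum_congr rfl fun b _ => ?_
          rw [hΨ j a b, hVdef]
          rfl
      _ = (-(expRow p d h R)) a (k, c) := h2
      _ = (-(E k ^ p)) a c := by
          simp only [Matrix.neg_apply, expRow]
          rw [hEp k]
  have hsolv : ∀ k : Fin p,
      E k ^ p + ∑ i : Fin p, Ψ i * E k ^ (p - 1 - (i : ℕ)) = 0 := by
    intro k
    have hre : ∑ i : Fin p, Ψ i * E k ^ (p - 1 - (i : ℕ))
        = ∑ j : Fin p, Ψ j.rev * E k ^ (j : ℕ) := by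
      refine Fintype.sum_bijective Fin.rev Fin.rev_bijective _ _ fun i => ?_
      have hv : ((Fin.rev i : Fin p) : ℕ) = p - 1 - (i : ℕ) := by
        rw [Fin.val_rev]; omega
      rw [Fin.rev_rev, hv]
    rw [hre, hMV k, add_neg_cancel]
  -- key multiplicative identity
  have hkey : ∀ k : Fin p, ∑ i : Fin p, Ψ i * F k ^ ((i : ℕ) + 1) = -1 := by
    intro k
    have h3 : (E k ^ p + ∑ i : Fin p, Ψ i * E k ^ (p - 1 - (i : ℕ))) * F k ^ p = 0 := by
      rw [hsolv k, Matrix.zero_mul]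
    rw [add_mul, Finset.sum_mul] at h3
    have hEFp : E k ^ p * F k ^ p = 1 := by
      rw [← Commute.mul_pow (hcomm k), hEF k, one_pow]
    have hterm : ∀ i : Fin p,
        Ψ i * E k ^ (p - 1 - (i : ℕ)) * F k ^ p = Ψ i * F k ^ ((i : ℕ) + 1) := by
      intro i
      have hi : (i : ℕ) < p := i.isLt
      have hsplit : F k ^ p = F k ^ (p - 1 - (i : ℕ)) * F k ^ ((i : ℕ) + 1) := by
        rw [← pow_add]; congr 1; omega
      have hone : E k ^ (p - 1 - (i : ℕ)) * F k ^ (p - 1 - (i : ℕ)) = 1 := by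
        rw [← Commute.mul_pow (hcomm k), hEF k, one_pow]
      rw [mul_assoc, hsplit, ← mul_assoc (E k ^ (p - 1 - (i : ℕ))), hone, one_mul]
    rw [hEFp, Finset.sum_congr rfl fun i _ => hterm i] at h3
    exact eq_neg_of_add_eq_zero_right h3
  -- the companion matrix
  set C : Matrix (Fin p × Fin d) (Fin p × Fin d) ℂ := fun x y =>
    if (x.1 : ℕ) = p - 1 then (-(Ψ (Fin.rev y.1))) x.2 y.2
    else if (y.1 : ℕ) = (x.1 : ℕ) + 1 then (if x.2 = y.2 then 1 else 0) else 0 with hCdef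
  set D : Matrix (Fin p × Fin d) (Fin p × Fin d) ℂ :=
    fun x y => if x.1 = y.1 then (E x.1) x.2 y.2 else 0 with hDdef
  set D' : Matrix (Fin p × Fin d) (Fin p × Fin d) ℂ :=
    fun x y => if x.1 = y.1 then (F x.1) x.2 y.2 else 0 with hD'def
  have hDunit : IsUnit D := by
    have hDD : D * D' = 1 := by
      funext x y
      obtain ⟨i, a⟩ := x
      obtain ⟨j, b⟩ := y
      rw [Matrix.mul_apply, Fintype.sum_prod_type]
      simp only [hD'def]
      have hterm : ∀ j' : Fin p, ∑ b' : Fin d,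
          D (i, a) (j', b') * (if j' = j then (F j') b' b else 0)
          = if i = j' ∧ j' = j then (E i * F i) a b else 0 := by
        intro j'
        by_cases hij' : i = j'
        · subst hij'
          by_cases hj'j : i = j
          · subst hj'j
            simp [hDdef, Matrix.mul_apply]
          · simp [hDdef, hj'j]
        · simp [hDdef, hij']
      rw [Finset.sum_congr rfl fun j' _ => hterm j']
      by_cases hij : i = j
      · subst hij
        rw [Finset.sum_eq_single i]
        · simp [hEF i, Matrix.one_apply, Prod.ext_iff]
        · intro j' _ hj'
          simp [Ne.symm hj']
        · simp
      · rw [Finset.sum_eq_zero]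
        · simp [Matrix.one_apply, Prod.ext_iff, hij]
        · intro j' _
          exact if_neg (fun hc => hij (hc.1.trans hc.2))
    exact ⟨⟨D, D', hDD, mul_eq_one_comm.mp hDD⟩, rfl⟩
  have hCV : C * V = V * D := by
    funext x y
    obtain ⟨i, a⟩ := x
    obtain ⟨k, c⟩ := y
    have hRHS : (V * D) (i, a) (k, c) = (E k ^ ((i : ℕ) + 1)) a c := by
      rw [Matrix.mul_apply, Fintype.sum_prod_type]
      have hterm : ∀ j : Fin p, ∑ b : Fin d, V (i, a) (j, b) * D (j, b) (k, c)
          = if j = k then (E k ^ ((i : ℕ) + 1)) a c else 0 := by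
        intro j
        by_cases hjk : j = k
        · subst hjk
          rw [if_pos rfl, pow_succ, Matrix.mul_apply]
          refine Finset.sum_congr rfl fun b _ => ?_
          simp [hDdef, hVdef, vand]
        · simp [hDdef, hjk]
      rw [Finset.sum_congr rfl fun j _ => hterm j,
        Finset.sum_eq_single k (fun j _ hj => if_neg hj)
          (fun hk => absurd (Finset.mem_univ k) hk), if_pos rfl]
    rw [hRHS, Matrix.mul_apply, Fintype.sum_prod_type]
    by_cases hi : (i : ℕ) = p - 1
    · have hstep : ∑ j : Fin p, ∑ b : Fin d, C (i, a) (j, b) * V (j, b) (k, c)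
          = (∑ j : Fin p, -(Ψ (Fin.rev j)) * E k ^ (j : ℕ)) a c := by
        simp only [Matrix.sum_apply, Matrix.mul_apply]
        refine Finset.sum_congr rfl fun j _ => Finset.sum_congr rfl fun b _ => ?_
        simp only [hCdef, hVdef, vand, if_pos hi]
      rw [hstep]
      have hsum : ∑ j : Fin p, -(Ψ (Fin.rev j)) * E k ^ (j : ℕ) = E k ^ p := by
        calc ∑ j : Fin p, -(Ψ (Fin.rev j)) * E k ^ (j : ℕ)
            = -∑ j : Fin p, Ψ (Fin.rev j) * E k ^ (j : ℕ) := by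
              rw [← Finset.sum_neg_distrib]
              exact Finset.sum_congr rfl fun j _ => by rw [neg_mul]
          _ = E k ^ p := by rw [hMV k, neg_neg]
      rw [hsum]
      have hip : (i : ℕ) + 1 = p := by omega
      rw [hip]
    · have hilt : (i : ℕ) + 1 < p := by have := i.isLt; omega
      have hterm : ∀ j : Fin p, ∑ b : Fin d, C (i, a) (j, b) * V (j, b) (k, c)
          = if j = (⟨(i : ℕ) + 1, hilt⟩ : Fin p) then (E k ^ ((i : ℕ) + 1)) a c else 0 := by
        intro j
        by_cases hj : j = (⟨(i : ℕ) + 1, hilt⟩ : Fin p)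
        · subst hj
          rw [if_pos rfl]
          have hCv : ∀ b : Fin d, C (i, a) ((⟨(i : ℕ) + 1, hilt⟩ : Fin p), b)
              = if a = b then 1 else 0 := by
            intro b
            simp only [hCdef]
            rw [if_neg hi]
            simp
          rw [Finset.sum_congr rfl fun b _ => by rw [hCv b]]
          simp [hVdef, vand, ite_mul, one_mul, zero_mul, Finset.sum_ite_eq]
        · have hj' : (j : ℕ) ≠ (i : ℕ) + 1 := fun hc => hj (Fin.ext hc)
          rw [if_neg hj]
          simp [hCdef, hi, hj']
      rw [Finset.sum_congr rfl fun j _ => hterm j,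
        Finset.sum_eq_single (⟨(i : ℕ) + 1, hilt⟩ : Fin p) (fun j _ hj => if_neg hj)
          (fun hk => absurd (Finset.mem_univ _) hk), if_pos rfl]
  have hCunit : IsUnit C := by
    have hC : C = V * D * V⁻¹ := by
      rw [← hCV, Matrix.mul_assoc, hVV', Matrix.mul_one]
    rw [hC]
    exact (hV.mul hDunit).mul ⟨⟨V⁻¹, V, hVV, hVV'⟩, rfl⟩
  -- (i)
  have hrev0 : (Fin.rev (⟨0, hp⟩ : Fin p)) = ⟨p - 1, by omega⟩ := by
    apply Fin.ext
    rw [Fin.val_rev]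
  have hΨp : IsUnit (Ψ ⟨p - 1, by omega⟩) := by
    rw [Matrix.isUnit_iff_isUnit_det, isUnit_iff_ne_zero]
    intro hdet0
    obtain ⟨v, hv0, hv⟩ := (Matrix.exists_mulVec_eq_zero_iff).mpr hdet0
    set w : Fin p × Fin d → ℂ := fun x => if x.1 = (⟨0, hp⟩ : Fin p) then v x.2 else 0
      with hwdef
    have hw : C *ᵥ w = 0 := by
      funext x
      obtain ⟨i, a⟩ := x
      show ∑ y : Fin p × Fin d, C (i, a) y * w y = 0
      rw [Fintype.sum_prod_type]
      have hterm : ∀ j : Fin p, ∑ b : Fin d, C (i, a) (j, b) * w (j, b)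
          = if j = (⟨0, hp⟩ : Fin p) then ∑ b : Fin d, C (i, a) (j, b) * v b else 0 := by
        intro j
        by_cases hj : j = (⟨0, hp⟩ : Fin p)
        · simp [hwdef, hj]
        · simp [hwdef, hj]
      rw [Finset.sum_congr rfl fun j _ => hterm j,
        Finset.sum_eq_single (⟨0, hp⟩ : Fin p) (fun j _ hj => if_neg hj)
          (fun hk => absurd (Finset.mem_univ _) hk)]
      · rw [if_pos rfl]
        by_cases hi : (i : ℕ) = p - 1
        · have hCe : ∀ b : Fin d, C (i, a) ((⟨0, hp⟩ : Fin p), b)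
              = -(Ψ ⟨p - 1, by omega⟩ a b) := by
            intro b
            simp only [hCdef, if_pos hi]
            rw [hrev0]
            rfl
          rw [Finset.sum_congr rfl fun b _ => by rw [hCe b, neg_mul]]
          rw [Finset.sum_neg_distrib]
          have h4 := congrFun hv a
          simp only [Matrix.mulVec, dotProduct, Pi.zero_apply] at h4
          rw [h4, neg_zero]
        · have hCe : ∀ b : Fin d, C (i, a) ((⟨0, hp⟩ : Fin p), b) = 0 := by
            intro b
            simp [hCdef, if_neg hi]
          simp [hCe]
    have hwz : w = 0 := by
      by_contra hw0
      have hdc : C.det = 0 := Matrix.exists_mulVec_eq_zero_iff.mp ⟨w, hw0, hw⟩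
      exact ((Matrix.isUnit_iff_isUnit_det C).mp hCunit).ne_zero hdc
    apply hv0
    funext b
    have := congrFun hwz ((⟨0, hp⟩ : Fin p), b)
    simpa [hwdef] using this
  refine ⟨hΨp, ?_, fun k => hsolv k⟩
  intro k
  have hΨpd : IsUnit (Ψ ⟨p - 1, by omega⟩).det :=
    (Matrix.isUnit_iff_isUnit_det _).mp hΨp
  simp only [hpow]
  have hre2 : ∑ j : Fin p,
        (-(Ψ ⟨p - 1, by omega⟩)⁻¹ * ΨN p d Ψ (p - 1 - (j : ℕ))) * F k ^ (p - 1 - (j : ℕ))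
      = ∑ m : Fin p, (-(Ψ ⟨p - 1, by omega⟩)⁻¹ * ΨN p d Ψ (m : ℕ)) * F k ^ (m : ℕ) := by
    refine Fintype.sum_bijective Fin.rev Fin.rev_bijective _ _ fun j => ?_
    have hv : ((Fin.rev j : Fin p) : ℕ) = p - 1 - (j : ℕ) := by
      rw [Fin.val_rev]; omega
    rw [hv]
  rw [hre2]
  have hfac : ∑ m : Fin p, (-(Ψ ⟨p - 1, by omega⟩)⁻¹ * ΨN p d Ψ (m : ℕ)) * F k ^ (m : ℕ)
      = -(Ψ ⟨p - 1, by omega⟩)⁻¹ * ∑ m : Fin p, ΨN p d Ψ (m : ℕ) * F k ^ (m : ℕ) := by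
    rw [Finset.mul_sum]
    exact Finset.sum_congr rfl fun m _ => by rw [mul_assoc]
  rw [hfac]
  have hsum : ∑ m : Fin p, ΨN p d Ψ (m : ℕ) * F k ^ (m : ℕ)
      = -(Ψ ⟨p - 1, by omega⟩ * F k ^ p) := by
    obtain ⟨n, rfl⟩ : ∃ n, p = n + 1 := ⟨p - 1, by omega⟩
    rw [Fin.sum_univ_succ]
    have h0 : ΨN (n + 1) d Ψ ((0 : Fin (n + 1)) : ℕ) * F k ^ ((0 : Fin (n + 1)) : ℕ)
        = 1 := by
      simp [ΨN]
    have hsucc : ∀ i : Fin n,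
        ΨN (n + 1) d Ψ ((Fin.succ i : Fin (n + 1)) : ℕ) * F k ^ ((Fin.succ i : Fin (n + 1)) : ℕ)
        = Ψ (Fin.castSucc i) * F k ^ ((i : ℕ) + 1) := by
      intro i
      have hval : ((Fin.succ i : Fin (n + 1)) : ℕ) = (i : ℕ) + 1 := rfl
      rw [hval]
      congr 1
      simp only [ΨN]
      rw [dif_neg (Nat.succ_ne_zero _), dif_pos (by omega : (i : ℕ) + 1 ≤ n + 1)]
      congr 1
    rw [h0, Finset.sum_congr rfl fun i _ => hsucc i]
    have hk2 := hkey k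
    rw [Fin.sum_univ_castSucc] at hk2
    simp only [Fin.coe_castSucc, Fin.val_last] at hk2
    have hS : ∑ i : Fin n, Ψ (Fin.castSucc i) * F k ^ ((i : ℕ) + 1)
        = -1 - Ψ (Fin.last n) * F k ^ (n + 1) := eq_sub_of_add_eq hk2
    rw [hS]
    have hlast : (⟨n + 1 - 1, by omega⟩ : Fin (n + 1)) = Fin.last n := by
      apply Fin.ext
      simp
    rw [hlast]
    abel
  rw [hsum, neg_mul_neg, ← mul_assoc, Matrix.nonsing_inv_mul _ hΨpd, one_mul]
end

section
/- Let p, d ≥ 1 and S_1,…,S_p ∈ ℂ^{d×d} be matrices such that the block Vandermonde matrix V(S_1,…,S_p) is invertible. Define Ψ_1,…,Ψ_p ∈ ℂ^{d×d} by [Ψ_p, Ψ_{p−1}, …, Ψ_1] = −[S_1^p, …, S_p^p] V(S_1,…,S_p)^{−1}. Then each S_k is a right solvent of Ψ(λ) = I_d λ^p + Ψ_1 λ^{p−1} + … + Ψ_p, and Ψ(λ) is the unique monic λ-matrix of degree p and order d having S_1,…,S_p as right solvents: if Ψ'(λ) = I_d λ^p + Ψ'_1 λ^{p−1} + … + Ψ'_p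 also has each S_k as a right solvent, then Ψ'_j = Ψ_j for all j = 1,…,p. -/
open Matrix

/-- The block row `(S 0 ^ p, …, S (p-1) ^ p)`. -/
def powRow (p d : ℕ) (S : Fin p → Mat d d) : Matrix (Fin d) (Fin p × Fin d) ℂ :=
  fun a y => (S y.1 ^ p) a y.2

/-- Row built from a block family. -/
def rowOf (p d : ℕ) (Φ : Fin p → Mat d d) : Matrix (Fin d) (Fin p × Fin d) ℂ :=
  fun a y => Φ y.1.rev a y.2

lemma rowOf_mul_vand (p d : ℕ) (S Φ : Fin p → Mat d d) (k : Fin p) (a b : Fin d) :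
    (rowOf p d Φ * vand p d S) a (k, b)
      = (∑ i : Fin p, Φ i * S k ^ (p - 1 - (i : ℕ))) a b := by
  rw [Matrix.mul_apply, Matrix.sum_apply]
  rw [Fintype.sum_prod_type]
  rw [← Equiv.sum_comp (Fin.revPerm (n := p))]
  refine Finset.sum_congr rfl fun j _ => ?_
  rw [Matrix.mul_apply]
  refine Finset.sum_congr rfl fun c _ => ?_
  simp [rowOf, vand, Fin.rev_rev, Fin.val_rev, Nat.sub_sub, Nat.add_comm 1]

theorem stmt_5 (p d : ℕ) (hp : 0 < p) (hd : 0 < d)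
    (S : Fin p → Mat d d) (hV : IsUnit (vand p d S))
    -- `[Ψ_p, Ψ_{p-1}, …, Ψ_1] = -[S_1^p, …, S_p^p] V(S_1,…,S_p)⁻¹`, i.e. the `j`-th block
    -- column (0-indexed) of the right-hand side is `Ψ_{p-j}`, i.e. `Ψ j.rev` with `Ψ i = Ψ_{i+1}`
    (Ψ : Fin p → Mat d d)
    (hΨ : ∀ (j : Fin p) (a b : Fin d),
      Ψ j.rev a b = (-(powRow p d S * (vand p d S)⁻¹)) a (j, b)) :
    (∀ k : Fin p, IsRightSolvent p d Ψ (S k)) ∧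
    ∀ Ψ' : Fin p → Mat d d, (∀ k : Fin p, IsRightSolvent p d Ψ' (S k)) → Ψ' = Ψ := by
  have hVd : IsUnit (vand p d S).det := (Matrix.isUnit_iff_isUnit_det _).mp hV
  have hR : rowOf p d Ψ = -(powRow p d S * (vand p d S)⁻¹) := by
    ext a ⟨j, b⟩
    exact hΨ j a b
  -- rowOf Ψ * V = -powRow
  have hRV : rowOf p d Ψ * vand p d S = -powRow p d S := by
    rw [hR, Matrix.neg_mul, Matrix.mul_assoc, Matrix.nonsing_inv_mul _ hVd, Matrix.mul_one]
  have solv : ∀ k : Fin p, IsRightSolvent p d Ψ (S k) := by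
    intro k
    unfold IsRightSolvent
    ext a b
    have := congrFun (congrFun hRV a) (k, b)
    rw [rowOf_mul_vand] at this
    simp only [Matrix.add_apply, Matrix.zero_apply, this]
    simp [powRow]
  refine ⟨solv, fun Ψ' hΨ' => ?_⟩
  have hRV' : rowOf p d Ψ' * vand p d S = -powRow p d S := by
    ext a ⟨k, b⟩
    rw [rowOf_mul_vand]
    have := hΨ' k
    unfold IsRightSolvent at this
    have h2 := congrFun (congrFun this a) b
    simp only [Matrix.add_apply, Matrix.zero_apply] at h2
    have : (∑ i : Fin p, Ψ' i * S k ^ (p - 1 - (i : ℕ))) a b = -((S k ^ p) a b) := by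
      linear_combination h2
    simpa [powRow] using this
  have heq : rowOf p d Ψ' = rowOf p d Ψ := by
    calc rowOf p d Ψ' = rowOf p d Ψ' * vand p d S * (vand p d S)⁻¹ := by
          rw [Matrix.mul_assoc, Matrix.mul_nonsing_inv _ hVd, Matrix.mul_one]
      _ = rowOf p d Ψ * vand p d S * (vand p d S)⁻¹ := by rw [hRV, hRV']
      _ = rowOf p d Ψ := by
          rw [Matrix.mul_assoc, Matrix.mul_nonsing_inv _ hVd, Matrix.mul_one]
  funext j
  ext a b
  have := congrFun (congrFun heq a) (j.rev, b)
  simpa [rowOf, Fin.rev_rev] using this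
end
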